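/- For every bijective enumeration v_1, …, v_n of V with v_1 = s, every step j with 1 ≤ j ≤ n+1, and every vertex v ∈ V, the Dijkstra label is never below the true shortest-path distance: d(v) ≤ D_j(v). -/

import Mathlib

open scoped ENNReal

/-- The length of the path `p 0, p 1, …, p k` in a graph on `Fin n` with
edge-weight function `w` (where `w u v = ∞` encodes the absence of an edge). -/
noncomputable def pathCost {n : ℕ} (w : Fin n → Fin n → ℝ≥0∞) (p : ℕ → Fin n) (k : ℕ) : ℝ≥0∞ :=
  ∑ i ∈ Finset.range k, w (p i) (p (i + 1))

/-- The shortest-path distance from `s` to `v`: the infimum over all finite paths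
from `s` to `v` of their lengths. -/
noncomputable def spDist {n : ℕ} (w : Fin n → Fin n → ℝ≥0∞) (s v : Fin n) : ℝ≥0∞ :=
  ⨅ (k : ℕ) (p : ℕ → Fin n) (_ : p 0 = s) (_ : p k = v), pathCost w p k

/-- Dijkstra's label recursion, processed according to the enumeration `e` (0-indexed):
`dijkstraD w s e 0` is the initial labelling (`0` at `s`, `∞` elsewhere), and step `j`
relaxes all edges out of the extracted vertex `e j`.  The paper's `D_j` is
`dijkstraD w s e (j-1)`; the extraction value of `v_j` is `dijkstraD w s e (j-1) (e (j-1))`. -/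
noncomputable def dijkstraD {n : ℕ} (w : Fin n → Fin n → ℝ≥0∞) (s : Fin n) (e : Fin n → Fin n) :
    ℕ → Fin n → ℝ≥0∞
  | 0 => fun u => if u = s then 0 else ⊤
  | j + 1 => fun u =>
      if h : j < n then
        min (dijkstraD w s e j u) (dijkstraD w s e j (e ⟨j, h⟩) + w (e ⟨j, h⟩) u)
      else dijkstraD w s e j u

/-- For every bijective enumeration of the vertices starting at `s`, at every step
`j` of Dijkstra's label recursion (paper steps `1 ≤ j ≤ n+1`, i.e. 0-indexed
`0 ≤ j ≤ n` here) and every vertex `v`, the label is never below the true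
shortest-path distance: `d v ≤ D_j v`. -/

lemma spDist_self_le {n : ℕ} (w : Fin n → Fin n → ℝ≥0∞) (s : Fin n) :
    spDist w s s ≤ 0 := by
  have : spDist w s s ≤ pathCost w (fun _ => s) 0 := by
    exact iInf_le_of_le 0 (iInf_le_of_le (fun _ => s) (iInf_le_of_le rfl (iInf_le _ rfl)))
  simpa [pathCost] using this

lemma spDist_triangle {n : ℕ} (w : Fin n → Fin n → ℝ≥0∞) (s u v : Fin n) :
    spDist w s v ≤ spDist w s u + w u v := by
  rw [spDist]
  refine le_trans ?_ (add_le_add_left (le_refl (spDist w s u)) (w u v))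
  rw [spDist, ENNReal.iInf_add]
  refine le_iInf fun k => ?_
  rw [ENNReal.iInf_add]
  refine le_iInf fun p => ?_
  rw [ENNReal.iInf_add]
  refine le_iInf fun h0 => ?_
  rw [ENNReal.iInf_add]
  refine le_iInf fun hk => ?_
  set q : ℕ → Fin n := fun i => if i ≤ k then p i else v with hq
  have hq0 : q 0 = s := by simp [hq, h0]
  have hqk : q (k + 1) = v := by simp [hq]
  refine le_trans (iInf_le_of_le (k+1) (iInf_le_of_le q (iInf_le_of_le hq0 (iInf_le _ hqk)))) ?_
  have : pathCost w q (k + 1) = pathCost w p k + w u v := by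
    rw [pathCost, Finset.sum_range_succ]
    congr 1
    · refine Finset.sum_congr rfl fun i hi => ?_
      have hi' := Finset.mem_range.mp hi
      have h1 : i ≤ k := le_of_lt hi'
      have h2 : i + 1 ≤ k := hi'
      simp [hq, h1, h2]
    · have h1 : q k = u := by simp [hq, hk]
      rw [h1, hqk]
  rw [this]

theorem spDist_le_dijkstraD {n : ℕ} (hn : 0 < n) (w : Fin n → Fin n → ℝ≥0∞) (s : Fin n)
    (e : Fin n → Fin n) (he : Function.Bijective e) (hes : e ⟨0, hn⟩ = s) :
    ∀ j : ℕ, j ≤ n → ∀ v : Fin n, spDist w s v ≤ dijkstraD w s e j v := by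
  intro j
  induction j with
  | zero =>
    intro _ v
    by_cases hv : v = s
    · subst hv
      simpa [dijkstraD] using spDist_self_le w v
    · simp [dijkstraD, hv]
  | succ j ih =>
    intro hj v
    have hj' : j ≤ n := Nat.le_of_succ_le hj
    rw [dijkstraD]
    split
    · next h =>
        exact le_min (ih hj' v)
          (le_trans (spDist_triangle w s (e ⟨j, h⟩) v)
            (add_le_add_left (ih hj' (e ⟨j, h⟩)) _))
    · exact ih hj' v
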